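/- In the SUM method with β ∈ (0,1), define p_0 = 0, p_t = (β/(1−β))(x_t − x_{t−1} + s γ_{t−1} g_{t−1}) for t ≥ 1, and z_t = x_t + p_t. If ∇f is α-Hölder continuous with constant A, then for every t ≥ 1: ‖∇f(z_t) − ∇f(x_t)‖² ≤ (A² β^{2α} |(1−β)s − 1|^{2α} / (1−β)^{3α}) · Σ_{i=0}^{t−1} β^{iα} γ_{t−1−i}^{2α} ‖g_{t−1−i}‖^{2α}. -/

import Mathlib

open Filter Topology
open Finset

lemma my_rpow_add_le (x yv : ℝ) (hx : 0 ≤ x) (hy : 0 ≤ yv) {α : ℝ} (h0 : 0 ≤ α) (h1 : α ≤ 1) :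
    (x + yv) ^ α ≤ x ^ α + yv ^ α := by
  have := NNReal.rpow_add_le_add_rpow (⟨x, hx⟩ : NNReal) (⟨yv, hy⟩ : NNReal) h0 h1
  have h := NNReal.coe_le_coe.2 this
  push_cast [NNReal.coe_rpow] at h
  exact h

lemma my_sum_rpow_le (n : ℕ) (b : ℕ → ℝ) (hb : ∀ i, 0 ≤ b i) {α : ℝ} (h0 : 0 < α) (h1 : α ≤ 1) :
    (∑ i ∈ range n, b i) ^ α ≤ ∑ i ∈ range n, b i ^ α := by
  induction n with
  | zero => simp [Real.zero_rpow h0.ne']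
  | succ n ih =>
      rw [sum_range_succ, sum_range_succ]
      calc (∑ i ∈ range n, b i + b n) ^ α ≤ (∑ i ∈ range n, b i) ^ α + b n ^ α :=
            my_rpow_add_le _ _ (Finset.sum_nonneg fun i _ => hb i) (hb n) h0.le h1
        _ ≤ _ := by gcongr


/-- **The momentum-deviation bound (10).** For the SUM iteration,
`‖∇f(z_t) - ∇f(x_t)‖² ≤ (A²β^{2α}|(1-β)s-1|^{2α}/(1-β)^{3α})
  ∑_{i=0}^{t-1} β^{iα} γ_{t-1-i}^{2α} ‖g_{t-1-i}‖^{2α}` for all `t ≥ 1`. -/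
theorem sum_method_gradient_deviation_bound
    {d : ℕ}
    (f : EuclideanSpace ℝ (Fin d) → ℝ)
    (fgrad : EuclideanSpace ℝ (Fin d) → EuclideanSpace ℝ (Fin d))
    (hdiff : ∀ p, HasGradientAt f (fgrad p) p)
    (α A : ℝ) (hα0 : 0 < α) (hα1 : α ≤ 1) (hA : 0 < A)
    (hHolder : ∀ p q, ‖fgrad p - fgrad q‖ ≤ A * ‖p - q‖ ^ α)
    (β s : ℝ) (hβ0 : 0 < β) (hβ1 : β < 1) (hs : 0 ≤ s)
    (γ : ℕ → ℝ) (hγ : ∀ t, 0 ≤ γ t)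
    (g : ℕ → EuclideanSpace ℝ (Fin d))
    (x₀ : EuclideanSpace ℝ (Fin d))
    (x y ys : ℕ → EuclideanSpace ℝ (Fin d))
    (hx0 : x 0 = x₀) (hys0 : ys 0 = x₀)
    (hy : ∀ t, y (t + 1) = x t - γ t • g t)
    (hys : ∀ t, ys (t + 1) = x t - (s * γ t) • g t)
    (hx : ∀ t, x (t + 1) = y (t + 1) + β • (ys (t + 1) - ys t))
    (p z : ℕ → EuclideanSpace ℝ (Fin d))
    (hp0 : p 0 = 0)
    (hp : ∀ t, p (t + 1) = (β / (1 - β)) • (x (t + 1) - x t + (s * γ t) • g t))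
    (hz : ∀ t, z t = x t + p t) :
    ∀ t : ℕ, 1 ≤ t →
      ‖fgrad (z t) - fgrad (x t)‖ ^ 2 ≤
        A ^ 2 * β ^ (2 * α) * |(1 - β) * s - 1| ^ (2 * α) / (1 - β) ^ (3 * α) *
          ∑ i ∈ Finset.range t,
            β ^ ((i : ℝ) * α) * (γ (t - 1 - i) ^ (2 * α) * ‖g (t - 1 - i)‖ ^ (2 * α)) := by
  have hB : (0:ℝ) < 1 - β := by linarith
  set c : ℝ := (1 - β) * s - 1 with hc
  set S : ℕ → ℝ := fun n => ∑ i ∈ range (n + 1), β ^ i * (γ (n - i) * ‖g (n - i)‖) with hSdef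
  have hSnn : ∀ n, 0 ≤ S n := by
    intro n
    apply Finset.sum_nonneg
    intro i _
    exact mul_nonneg (by positivity) (mul_nonneg (hγ _) (norm_nonneg _))
  -- recursion
  have hrec0 : x 1 - x 0 + (s * γ 0) • g 0 = c • (γ 0 • g 0) := by
    rw [hx 0, hy 0, hys 0, hys0, hx0, hc]; module
  have hrec : ∀ t, x (t + 2) - x (t + 1) + (s * γ (t + 1)) • g (t + 1) =
      β • (x (t + 1) - x t + (s * γ t) • g t) + c • (γ (t + 1) • g (t + 1)) := by
    intro t
    rw [hx (t + 1), hy (t + 1), hys (t + 1), hys t, hc]; module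
  have hS : ∀ n, S (n + 1) = β * S n + γ (n + 1) * ‖g (n + 1)‖ := by
    intro n
    simp only [hSdef]
    rw [Finset.sum_range_succ']
    simp only [Nat.succ_sub_succ, pow_zero, one_mul, Nat.sub_zero]
    rw [Finset.mul_sum]
    congr 1
    apply Finset.sum_congr rfl
    intro i _
    ring
  have hm : ∀ n, ‖x (n + 1) - x n + (s * γ n) • g n‖ ≤ |c| * S n := by
    intro n
    induction n with
    | zero =>
        rw [hrec0, norm_smul, norm_smul, Real.norm_eq_abs, Real.norm_eq_abs,
          abs_of_nonneg (hγ 0)]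
        have : S 0 = γ 0 * ‖g 0‖ := by simp [hSdef]
        rw [this]
    | succ n ih =>
        calc ‖x (n + 2) - x (n + 1) + (s * γ (n + 1)) • g (n + 1)‖
            = ‖β • (x (n + 1) - x n + (s * γ n) • g n) + c • (γ (n + 1) • g (n + 1))‖ := by
              rw [hrec n]
          _ ≤ ‖β • (x (n + 1) - x n + (s * γ n) • g n)‖ + ‖c • (γ (n + 1) • g (n + 1))‖ :=
              norm_add_le _ _
          _ = β * ‖x (n + 1) - x n + (s * γ n) • g n‖ + |c| * (γ (n + 1) * ‖g (n + 1)‖) := by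
              rw [norm_smul, norm_smul, norm_smul, Real.norm_eq_abs, Real.norm_eq_abs,
                Real.norm_eq_abs, abs_of_nonneg hβ0.le, abs_of_nonneg (hγ (n + 1))]
          _ ≤ β * (|c| * S n) + |c| * (γ (n + 1) * ‖g (n + 1)‖) := by
              gcongr
          _ = |c| * S (n + 1) := by rw [hS n]; ring
  -- main part
  intro t ht
  obtain ⟨n, rfl⟩ : ∃ n, t = n + 1 := ⟨t - 1, by omega⟩
  have hpn : ‖p (n + 1)‖ ≤ β / (1 - β) * |c| * S n := by
    rw [hp n, norm_smul, Real.norm_eq_abs, abs_of_nonneg (by positivity : (0:ℝ) ≤ β / (1 - β))]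
    rw [mul_assoc]
    exact mul_le_mul_of_nonneg_left (hm n) (by positivity)
  set K : ℝ := β / (1 - β) * |c| with hK
  have hKnn : 0 ≤ K := by positivity
  -- Cauchy–Schwarz
  set T : ℝ := ∑ i ∈ range (n + 1), β ^ i * (γ (n - i) * ‖g (n - i)‖) ^ 2 with hT
  have hTnn : 0 ≤ T := Finset.sum_nonneg fun i _ => by positivity
  have hCS : S n ^ 2 ≤ (∑ i ∈ range (n + 1), β ^ i) * T := by
    have h := Finset.sum_mul_sq_le_sq_mul_sq (range (n + 1))
      (fun i => Real.sqrt (β ^ i)) (fun i => Real.sqrt (β ^ i) * (γ (n - i) * ‖g (n - i)‖))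
    have e1 : ∑ i ∈ range (n + 1),
        Real.sqrt (β ^ i) * (Real.sqrt (β ^ i) * (γ (n - i) * ‖g (n - i)‖)) = S n := by
      apply Finset.sum_congr rfl
      intro i _
      rw [← mul_assoc, Real.mul_self_sqrt (by positivity)]
    have e2 : ∑ i ∈ range (n + 1), Real.sqrt (β ^ i) ^ 2 = ∑ i ∈ range (n + 1), β ^ i := by
      apply Finset.sum_congr rfl
      intro i _
      rw [Real.sq_sqrt (by positivity)]
    have e3 : ∑ i ∈ range (n + 1), (Real.sqrt (β ^ i) * (γ (n - i) * ‖g (n - i)‖)) ^ 2 = T := by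
      apply Finset.sum_congr rfl
      intro i _
      rw [mul_pow, Real.sq_sqrt (by positivity)]
    rw [e1, e2, e3] at h
    exact h
  have hgeom : ∑ i ∈ range (n + 1), β ^ i ≤ 1 / (1 - β) := by
    rw [geom_sum_eq hβ1.ne]
    have e : (β ^ (n + 1) - 1) / (β - 1) = (1 - β ^ (n + 1)) / (1 - β) := by
      rw [← neg_div_neg_eq]; congr 1 <;> ring
    rw [e]
    gcongr
    · have : (0:ℝ) ≤ β ^ (n + 1) := by positivity
      linarith
  have hCS' : S n ^ 2 ≤ 1 / (1 - β) * T :=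
    hCS.trans (mul_le_mul_of_nonneg_right hgeom hTnn)
  -- gradient deviation
  have h1 : ‖fgrad (z (n + 1)) - fgrad (x (n + 1))‖ ≤ A * ‖p (n + 1)‖ ^ α := by
    rw [hz (n + 1)]
    have h := hHolder (x (n + 1) + p (n + 1)) (x (n + 1))
    rwa [add_sub_cancel_left] at h
  have pnn : (0:ℝ) ≤ ‖p (n + 1)‖ := norm_nonneg _
  have step2 : ‖fgrad (z (n + 1)) - fgrad (x (n + 1))‖ ^ 2 ≤ A ^ 2 * ‖p (n + 1)‖ ^ (2 * α) := by
    calc ‖fgrad (z (n + 1)) - fgrad (x (n + 1))‖ ^ 2 ≤ (A * ‖p (n + 1)‖ ^ α) ^ 2 :=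
          pow_le_pow_left₀ (norm_nonneg _) h1 2
      _ = A ^ 2 * ‖p (n + 1)‖ ^ (2 * α) := by
          rw [mul_pow]
          congr 1
          rw [← Real.rpow_natCast (‖p (n + 1)‖ ^ α) 2, ← Real.rpow_mul pnn]
          norm_num [mul_comm]
  have step3 : ‖p (n + 1)‖ ^ (2 * α) ≤ K ^ (2 * α) * (S n ^ 2) ^ α := by
    calc ‖p (n + 1)‖ ^ (2 * α) ≤ (K * S n) ^ (2 * α) :=
          Real.rpow_le_rpow pnn hpn (by positivity)
      _ = K ^ (2 * α) * (S n ^ 2) ^ α := by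
          rw [Real.mul_rpow hKnn (hSnn n)]
          congr 1
          rw [← Real.rpow_natCast (S n) 2, ← Real.rpow_mul (hSnn n)]
          norm_num
  have step4 : (S n ^ 2) ^ α ≤ (1 / (1 - β)) ^ α * T ^ α := by
    calc (S n ^ 2) ^ α ≤ (1 / (1 - β) * T) ^ α :=
          Real.rpow_le_rpow (sq_nonneg _) hCS' hα0.le
      _ = (1 / (1 - β)) ^ α * T ^ α := Real.mul_rpow (by positivity) hTnn
  have step5 : T ^ α ≤ ∑ i ∈ range (n + 1),
      β ^ ((i : ℝ) * α) * (γ (n - i) ^ (2 * α) * ‖g (n - i)‖ ^ (2 * α)) := by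
    calc T ^ α ≤ ∑ i ∈ range (n + 1), (β ^ i * (γ (n - i) * ‖g (n - i)‖) ^ 2) ^ α :=
          my_sum_rpow_le (n + 1) _ (fun i => by positivity) hα0 hα1
      _ = _ := by
          apply Finset.sum_congr rfl
          intro i _
          rw [Real.mul_rpow (by positivity) (sq_nonneg _)]
          congr 1
          · rw [← Real.rpow_natCast β i, ← Real.rpow_mul hβ0.le]
          · rw [mul_pow, Real.mul_rpow (by positivity) (sq_nonneg _)]
            congr 1
            · rw [← Real.rpow_natCast (γ (n - i)) 2, ← Real.rpow_mul (hγ _)]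
              norm_num
            · rw [← Real.rpow_natCast (‖g (n - i)‖) 2, ← Real.rpow_mul (norm_nonneg _)]
              norm_num
  have hsum_nn : (0:ℝ) ≤ ∑ i ∈ range (n + 1),
      β ^ ((i : ℝ) * α) * (γ (n - i) ^ (2 * α) * ‖g (n - i)‖ ^ (2 * α)) :=
    Finset.sum_nonneg fun i _ => mul_nonneg (Real.rpow_nonneg hβ0.le _)
      (mul_nonneg (Real.rpow_nonneg (hγ _) _) (Real.rpow_nonneg (norm_nonneg _) _))
  have hconst : A ^ 2 * (K ^ (2 * α) * (1 / (1 - β)) ^ α) =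
      A ^ 2 * β ^ (2 * α) * |c| ^ (2 * α) / (1 - β) ^ (3 * α) := by
    rw [hK, Real.mul_rpow (by positivity) (abs_nonneg c), Real.div_rpow hβ0.le hB.le,
      Real.div_rpow zero_le_one hB.le, Real.one_rpow]
    have e : (1 - β) ^ (3 * α) = (1 - β) ^ (2 * α) * (1 - β) ^ α := by
      rw [← Real.rpow_add hB]; ring_nf
    rw [e]
    have h2 : (1 - β) ^ (2 * α) ≠ 0 := (Real.rpow_pos_of_pos hB _).ne'
    have h3 : (1 - β) ^ α ≠ 0 := (Real.rpow_pos_of_pos hB _).ne'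
    field_simp
  -- finish
  have goal_eq : ∀ i, (n + 1 - 1 - i) = n - i := fun i => by omega
  simp only [goal_eq]
  calc ‖fgrad (z (n + 1)) - fgrad (x (n + 1))‖ ^ 2
      ≤ A ^ 2 * ‖p (n + 1)‖ ^ (2 * α) := step2
    _ ≤ A ^ 2 * (K ^ (2 * α) * ((1 / (1 - β)) ^ α * T ^ α)) := by
        refine mul_le_mul_of_nonneg_left ?_ (by positivity)
        exact step3.trans (mul_le_mul_of_nonneg_left step4 (by positivity))
    _ ≤ A ^ 2 * (K ^ (2 * α) * ((1 / (1 - β)) ^ α *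
          ∑ i ∈ range (n + 1), β ^ ((i : ℝ) * α) *
            (γ (n - i) ^ (2 * α) * ‖g (n - i)‖ ^ (2 * α)))) := by
        refine mul_le_mul_of_nonneg_left ?_ (by positivity)
        refine mul_le_mul_of_nonneg_left ?_ (by positivity)
        exact mul_le_mul_of_nonneg_left step5 (by positivity)
    _ = A ^ 2 * β ^ (2 * α) * |c| ^ (2 * α) / (1 - β) ^ (3 * α) *
          ∑ i ∈ range (n + 1), β ^ ((i : ℝ) * α) *
            (γ (n - i) ^ (2 * α) * ‖g (n - i)‖ ^ (2 * α)) := by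
        rw [← hconst]; ring
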